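/- Let φ be a satisfiable 3-CNF formula with m clauses. In the MEC reduction graph G built from φ (4 colors a,b,c,v; one c-colored vertex per clause; for each variable x with n_x literal occurrences a cycle of length 4n_x alternating colors a,v,b,v; clause vertices attached to distinct literal vertices), there exists a spanning subgraph G'' in which every connected component is colorful, with exactly m components of size 4, 2m components of size 3, and 3m singleton components, so that the transitive closure of G'' has exactly 12m edges. -/

import Mathlib

open scoped Classical

/-- Vertex set of the MEC reduction graph: one vertex per clause (color `c`),
and for each variable `x` with `n x` literal occurrences, vertices
`a^x_i, v^x_i, b^x_i, w^x_i` (positions `0,1,2,3`) for `i : Fin (n x)`. -/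
abbrev MecVert (X : Type*) (m : ℕ) (n : X → ℕ) : Type _ :=
  Fin m ⊕ (Σ x : X, Fin (n x) × Fin 4)

/-- Colors `0 = a`, `1 = v`, `2 = b`, `3 = c`: clause vertices get color `c`;
positions `0,1,2,3` on a variable cycle get colors `a, v, b, v`. -/
def mecColor {X : Type*} {m : ℕ} {n : X → ℕ} : MecVert X m n → Fin 4
  | Sum.inl _ => 3
  | Sum.inr ⟨_, _, j⟩ => if j = 0 then 0 else if j = 2 then 2 else 1

/-- Edge relation of the MEC reduction graph: for each variable `x` a cycle
`a^x_i – v^x_i – b^x_i – w^x_i – a^x_{i+1 (mod n x)}`, and each clause vertex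
joined to the vertex `v^x_i` (resp. `w^x_i`) corresponding, via the occurrence
enumeration `e`, to each of its positive (resp. negative) literal occurrences. -/
def mecRel {X : Type*} [DecidableEq X] (m : ℕ) (n : X → ℕ)
    (lit : Fin m → Fin 3 → X × Bool)
    (e : ∀ x : X, {q : Fin m × Fin 3 // (lit q.1 q.2).1 = x} ≃ Fin (n x)) :
    MecVert X m n → MecVert X m n → Prop
  | Sum.inr ⟨x, i, j⟩, Sum.inr ⟨x', i', j'⟩ =>
      x = x' ∧ ((HEq i i' ∧ ((j = 0 ∧ j' = 1) ∨ (j = 1 ∧ j' = 2) ∨ (j = 2 ∧ j' = 3))) ∨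
        (j = 3 ∧ j' = 0 ∧
          HEq (Fin.mk ((i.val + 1) % n x)
            (Nat.mod_lt _ (Nat.lt_of_le_of_lt (Nat.zero_le _) i.isLt))) i'))
  | Sum.inl cj, Sum.inr ⟨x, i, j⟩ =>
      ∃ (s : Fin 3) (h : (lit cj s).1 = x),
        e x ⟨(cj, s), h⟩ = i ∧ j = (if (lit cj s).2 then 1 else 3)
  | _, _ => False

/-- The MEC reduction graph built from a 3-CNF formula. -/
def mecGraph {X : Type*} [DecidableEq X] (m : ℕ) (n : X → ℕ)
    (lit : Fin m → Fin 3 → X × Bool)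
    (e : ∀ x : X, {q : Fin m × Fin 3 // (lit q.1 q.2).1 = x} ≃ Fin (n x)) :
    SimpleGraph (MecVert X m n) :=
  SimpleGraph.fromRel (mecRel m n lit e)

namespace Stmt14
set_option linter.unusedSectionVars false

def succF {k : ℕ} (i : Fin k) : Fin k :=
  ⟨(i.val + 1) % k, Nat.mod_lt _ i.pos⟩

def prevF {k : ℕ} (i : Fin k) : Fin k :=
  ⟨(i.val + (k - 1)) % k, Nat.mod_lt _ i.pos⟩

lemma succF_prevF {k : ℕ} (i : Fin k) : succF (prevF i) = i := by
  have hk := i.pos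
  apply Fin.ext
  show ((i.val + (k - 1)) % k + 1) % k = i.val
  rw [Nat.mod_add_mod]
  have h1 : i.val + (k - 1) + 1 = i.val + k := by omega
  rw [h1, Nat.add_mod_right, Nat.mod_eq_of_lt i.isLt]

lemma prevF_succF {k : ℕ} (i : Fin k) : prevF (succF i) = i := by
  have hk := i.pos
  apply Fin.ext
  show ((i.val + 1) % k + (k - 1)) % k = i.val
  rw [Nat.mod_add_mod]
  have h1 : i.val + 1 + (k - 1) = i.val + k := by omega
  rw [h1, Nat.add_mod_right, Nat.mod_eq_of_lt i.isLt]

section Main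

variable {X : Type*} [DecidableEq X] {m : ℕ} {n : X → ℕ}
  (lit : Fin m → Fin 3 → X × Bool)
  (e : ∀ x : X, {q : Fin m × Fin 3 // (lit q.1 q.2).1 = x} ≃ Fin (n x))
  (f : X → Bool) (s : Fin m → Fin 3)

/-- cycle vertex -/
def cyc (x : X) (i : Fin (n x)) (p : Fin 4) : MecVert X m n := Sum.inr ⟨x, i, p⟩

/-- occurrence chosen by clause `j`. -/
def occ (j : Fin m) : Σ x : X, Fin (n x) :=
  ⟨(lit j (s j)).1, e _ ⟨(j, s j), rfl⟩⟩

lemma occ_retract (j : Fin m) :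
    ((e (occ lit e s j).1).symm (occ lit e s j).2).val.1 = j := by
  show ((e (lit j (s j)).1).symm (e _ ⟨(j, s j), rfl⟩)).val.1 = j
  rw [Equiv.symm_apply_apply]

lemma occ_injective : Function.Injective (occ lit e s) := by
  intro j j' h
  have := occ_retract lit e s j
  rw [h, occ_retract] at this
  exact this.symm

/-- component index type -/
abbrev CIdx (X : Type*) (n : X → ℕ) : Type _ :=
  (Σ x : X, Fin (n x)) ⊕ (Σ x : X, Fin (n x))

def comp : MecVert X m n → CIdx X n
  | Sum.inl j => Sum.inl (occ lit e s j)
  | Sum.inr ⟨x, i, p⟩ =>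
    if p = 0 then (if f x then Sum.inl ⟨x, i⟩ else Sum.inl ⟨x, prevF i⟩)
    else if p = 1 then (if f x then Sum.inl ⟨x, i⟩ else Sum.inr ⟨x, i⟩)
    else if p = 2 then Sum.inl ⟨x, i⟩
    else (if f x then Sum.inr ⟨x, i⟩ else Sum.inl ⟨x, i⟩)


lemma comp_inlj (j : Fin m) : comp lit e f s (Sum.inl j) = Sum.inl (occ lit e s j) := rfl

lemma comp_cyc0 (x : X) (i : Fin (n x)) :
    comp lit e f s (cyc x i 0) = (if f x then Sum.inl ⟨x, i⟩ else Sum.inl ⟨x, prevF i⟩) := rfl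

lemma comp_cyc1 (x : X) (i : Fin (n x)) :
    comp lit e f s (cyc x i 1) = (if f x then Sum.inl ⟨x, i⟩ else Sum.inr ⟨x, i⟩) := rfl

lemma comp_cyc2 (x : X) (i : Fin (n x)) :
    comp lit e f s (cyc x i 2) = Sum.inl ⟨x, i⟩ := rfl

lemma comp_cyc3 (x : X) (i : Fin (n x)) :
    comp lit e f s (cyc x i 3) = (if f x then Sum.inr ⟨x, i⟩ else Sum.inl ⟨x, i⟩) := rfl

lemma fin4_eq (p : Fin 4) : p = 0 ∨ p = 1 ∨ p = 2 ∨ p = 3 := by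
  revert p; decide

lemma comp_eq_inl_iff (u : MecVert X m n) (x : X) (i : Fin (n x)) :
    comp lit e f s u = Sum.inl ⟨x, i⟩ ↔
      ((∃ j, occ lit e s j = ⟨x, i⟩ ∧ u = Sum.inl j) ∨
       u = cyc x i 2 ∨
       u = (if f x then cyc x i 0 else cyc x (succF i) 0) ∨
       u = (if f x then cyc x i 1 else cyc x i 3)) := by
  constructor
  · intro h
    match u with
    | Sum.inl j =>
      exact Or.inl ⟨j, Sum.inl.inj h, rfl⟩
    | Sum.inr ⟨y, k, p⟩ =>
      rcases fin4_eq p with rfl | rfl | rfl | rfl <;> by_cases hfy : f y <;>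
        simp [comp, hfy, Sigma.mk.inj_iff] at h
      all_goals
        (obtain ⟨rfl, hk⟩ := h
         cases eq_of_heq hk
         simp [cyc, hfy, succF_prevF, Sigma.mk.inj_iff])
  · rintro (⟨j, hj, rfl⟩ | rfl | rfl | rfl)
    · rw [comp_inlj, hj]
    · rfl
    · by_cases hfx : f x <;> simp [hfx, comp_cyc0, prevF_succF]
    · by_cases hfx : f x <;> simp [hfx, comp_cyc1, comp_cyc3]

lemma comp_eq_inr_iff (u : MecVert X m n) (x : X) (i : Fin (n x)) :
    comp lit e f s u = Sum.inr ⟨x, i⟩ ↔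
      u = (if f x then cyc x i 3 else cyc x i 1) := by
  constructor
  · intro h
    match u with
    | Sum.inl j => exact absurd h (by simp [comp_inlj])
    | Sum.inr ⟨y, k, p⟩ =>
      rcases fin4_eq p with rfl | rfl | rfl | rfl <;> by_cases hfy : f y <;>
        simp [comp, hfy, Sigma.mk.inj_iff] at h
      all_goals
        (obtain ⟨rfl, hk⟩ := h
         cases eq_of_heq hk
         simp [cyc, hfy])
  · rintro rfl
    by_cases hfx : f x <;> simp [hfx, comp_cyc1, comp_cyc3]


/-- the spanning subgraph -/
def G2 : SimpleGraph (MecVert X m n) :=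
  SimpleGraph.fromRel (fun u v => mecRel m n lit e u v ∧ comp lit e f s u = comp lit e f s v)

lemma G2_le : G2 lit e f s ≤ mecGraph m n lit e := by
  intro u v h
  simp only [G2, mecGraph, SimpleGraph.fromRel_adj] at h ⊢
  exact ⟨h.1, h.2.imp (fun h' => h'.1) (fun h' => h'.1)⟩

lemma adj_comp {u v : MecVert X m n} (h : (G2 lit e f s).Adj u v) :
    comp lit e f s u = comp lit e f s v := by
  simp only [G2, SimpleGraph.fromRel_adj] at h
  rcases h.2 with h' | h'
  · exact h'.2
  · exact h'.2.symm

lemma reachable_comp {u v : MecVert X m n} (h : (G2 lit e f s).Reachable u v) :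
    comp lit e f s u = comp lit e f s v := by
  obtain ⟨w⟩ := h
  induction w with
  | nil => rfl
  | cons a _ ih => exact (adj_comp lit e f s a).trans ih

lemma adj01 {x : X} {i : Fin (n x)} (hx : f x = true) :
    (G2 lit e f s).Adj (cyc x i 0) (cyc x i 1) := by
  simp only [G2, SimpleGraph.fromRel_adj]
  refine ⟨by simp [cyc], Or.inl ⟨⟨rfl, Or.inl ⟨HEq.rfl, Or.inl ⟨rfl, rfl⟩⟩⟩, ?_⟩⟩
  rw [comp_cyc0, comp_cyc1, hx]
  simp

lemma adj12 {x : X} {i : Fin (n x)} (hx : f x = true) :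
    (G2 lit e f s).Adj (cyc x i 1) (cyc x i 2) := by
  simp only [G2, SimpleGraph.fromRel_adj]
  refine ⟨by simp [cyc], Or.inl ⟨⟨rfl, Or.inl ⟨HEq.rfl, Or.inr (Or.inl ⟨rfl, rfl⟩)⟩⟩, ?_⟩⟩
  rw [comp_cyc1, comp_cyc2, hx]
  simp

lemma adj23 {x : X} {i : Fin (n x)} (hx : f x = false) :
    (G2 lit e f s).Adj (cyc x i 2) (cyc x i 3) := by
  simp only [G2, SimpleGraph.fromRel_adj]
  refine ⟨by simp [cyc], Or.inl ⟨⟨rfl, Or.inl ⟨HEq.rfl, Or.inr (Or.inr ⟨rfl, rfl⟩)⟩⟩, ?_⟩⟩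
  rw [comp_cyc2, comp_cyc3, hx]
  simp

lemma adj30 {x : X} {i : Fin (n x)} (hx : f x = false) :
    (G2 lit e f s).Adj (cyc x i 3) (cyc x (succF i) 0) := by
  simp only [G2, SimpleGraph.fromRel_adj]
  refine ⟨by simp [cyc, succF], Or.inl ⟨⟨rfl, Or.inr ⟨rfl, rfl, heq_of_eq rfl⟩⟩, ?_⟩⟩
  rw [comp_cyc3, comp_cyc0, hx, prevF_succF]
  simp

lemma adjC (hs : ∀ j, (lit j (s j)).2 = f ((lit j (s j)).1)) (j : Fin m) :
    (G2 lit e f s).Adj (Sum.inl j)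
      (cyc ((lit j (s j)).1) (e _ ⟨(j, s j), rfl⟩)
        (if (lit j (s j)).2 then 1 else 3)) := by
  simp only [G2, SimpleGraph.fromRel_adj]
  refine ⟨by simp [cyc], Or.inl ⟨⟨s j, rfl, rfl, rfl⟩, ?_⟩⟩
  rw [comp_inlj]
  rcases hb : (lit j (s j)).2 with _ | _ <;>
    · have hfx := (hs j).symm.trans hb
      simp only [if_true, if_false, Bool.false_eq_true, reduceIte]
      first
        | rw [comp_cyc1, hfx]
        | rw [comp_cyc3, hfx]
      simp [occ]

/-- canonical representative of each component -/
def repC : CIdx X n → MecVert X m n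
  | Sum.inl ⟨x, i⟩ => cyc x i 2
  | Sum.inr ⟨x, i⟩ => if f x then cyc x i 3 else cyc x i 1

lemma comp_repC (c : CIdx X n) : comp lit e f s (repC f c) = c := by
  rcases c with ⟨x, i⟩ | ⟨x, i⟩
  · exact comp_cyc2 lit e f s x i
  · by_cases hfx : f x <;> simp [repC, hfx, comp_cyc1, comp_cyc3]

lemma reach_rep (hs : ∀ j, (lit j (s j)).2 = f ((lit j (s j)).1)) (u : MecVert X m n) :
    (G2 lit e f s).Reachable u (repC f (comp lit e f s u)) := by
  match u with
  | Sum.inl j =>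
    have h0 := (adjC lit e f s hs j).reachable
    rcases hb : (lit j (s j)).2 with _ | _
    · have hfx : f ((lit j (s j)).1) = false := (hs j).symm.trans hb
      rw [hb] at h0
      simp only [Bool.false_eq_true, reduceIte] at h0
      refine h0.trans ?_
      rw [comp_inlj]
      exact ((adj23 lit e f s hfx).symm.reachable : _)
    · have hfx : f ((lit j (s j)).1) = true := (hs j).symm.trans hb
      rw [hb] at h0
      simp only [reduceIte] at h0
      refine h0.trans ?_
      rw [comp_inlj]
      exact (adj12 lit e f s hfx).reachable
  | Sum.inr ⟨x, i, p⟩ =>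
    rcases fin4_eq p with rfl | rfl | rfl | rfl <;> by_cases hfx : f x
    · rw [show (Sum.inr ⟨x, i, 0⟩ : MecVert X m n) = cyc x i 0 from rfl, comp_cyc0, if_pos hfx]
      exact ((adj01 lit e f s hfx).reachable).trans (adj12 lit e f s hfx).reachable
    · have hfx' : f x = false := by simpa using hfx
      rw [show (Sum.inr ⟨x, i, 0⟩ : MecVert X m n) = cyc x i 0 from rfl, comp_cyc0, if_neg hfx]
      have h30 := (adj30 lit e f s hfx' (i := prevF i))
      rw [succF_prevF] at h30
      exact (h30.symm.reachable).trans (adj23 lit e f s hfx' (i := prevF i)).symm.reachable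
    · rw [show (Sum.inr ⟨x, i, 1⟩ : MecVert X m n) = cyc x i 1 from rfl, comp_cyc1, if_pos hfx]
      exact (adj12 lit e f s hfx).reachable
    · rw [show (Sum.inr ⟨x, i, 1⟩ : MecVert X m n) = cyc x i 1 from rfl, comp_cyc1, if_neg hfx]
      simp only [repC, if_neg hfx]
      rfl
    · rw [show (Sum.inr ⟨x, i, 2⟩ : MecVert X m n) = cyc x i 2 from rfl, comp_cyc2]
      rfl
    · rw [show (Sum.inr ⟨x, i, 2⟩ : MecVert X m n) = cyc x i 2 from rfl, comp_cyc2]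
      rfl
    · rw [show (Sum.inr ⟨x, i, 3⟩ : MecVert X m n) = cyc x i 3 from rfl, comp_cyc3, if_pos hfx]
      simp only [repC, if_pos hfx]
      rfl
    · have hfx' : f x = false := by simpa using hfx
      rw [show (Sum.inr ⟨x, i, 3⟩ : MecVert X m n) = cyc x i 3 from rfl, comp_cyc3, if_neg hfx]
      exact (adj23 lit e f s hfx').symm.reachable

lemma reachable_iff (hs : ∀ j, (lit j (s j)).2 = f ((lit j (s j)).1))
    (u v : MecVert X m n) :
    (G2 lit e f s).Reachable u v ↔ comp lit e f s u = comp lit e f s v := by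
  constructor
  · exact reachable_comp lit e f s
  · intro h
    refine (reach_rep lit e f s hs u).trans ?_
    rw [h]
    exact (reach_rep lit e f s hs v).symm


lemma colorful (u v : MecVert X m n)
    (hcomp : comp lit e f s u = comp lit e f s v) (hc : mecColor u = mecColor v) :
    u = v := by
  rcases hcu : comp lit e f s u with ⟨x, i⟩ | ⟨x, i⟩
  · have hcv : comp lit e f s v = Sum.inl ⟨x, i⟩ := by rw [← hcomp, hcu]
    rcases (comp_eq_inl_iff lit e f s u x i).mp hcu with ⟨j, hj, rfl⟩ | rfl | rfl | rfl <;>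
      rcases (comp_eq_inl_iff lit e f s v x i).mp hcv with ⟨j', hj', rfl⟩ | rfl | rfl | rfl <;>
      first
        | rfl
        | (exact congrArg Sum.inl (occ_injective lit e s (hj.trans hj'.symm)))
        | (by_cases hfx : f x <;> simp [mecColor, cyc, hfx] at hc)
  · have hcv : comp lit e f s v = Sum.inr ⟨x, i⟩ := by rw [← hcomp, hcu]
    rw [(comp_eq_inr_iff lit e f s u x i).mp hcu, (comp_eq_inr_iff lit e f s v x i).mp hcv]

end Main

section Counting

variable {X : Type*} [Fintype X] [DecidableEq X] {m : ℕ} {n : X → ℕ}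
  (lit : Fin m → Fin 3 → X × Bool)
  (e : ∀ x : X, {q : Fin m × Fin 3 // (lit q.1 q.2).1 = x} ≃ Fin (n x))
  (f : X → Bool) (s : Fin m → Fin 3)

def Fib (c : CIdx X n) : Finset (MecVert X m n) :=
  Finset.univ.filter (fun u => comp lit e f s u = c)

noncomputable def fibCard (c : CIdx X n) : ℕ := Nat.card {u : MecVert X m n // comp lit e f s u = c}

lemma fibCard_eq (c : CIdx X n) : fibCard lit e f s c = (Fib lit e f s c).card := by
  rw [fibCard, Nat.card_eq_fintype_card, Fib, Fintype.card_subtype]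

lemma fib_inr (x : X) (i : Fin (n x)) : fibCard lit e f s (Sum.inr ⟨x, i⟩) = 1 := by
  rw [fibCard_eq]
  have h : Fib lit e f s (Sum.inr ⟨x, i⟩) = {if f x then cyc x i 3 else cyc x i 1} := by
    ext u
    simp [Fib, comp_eq_inr_iff]
  rw [h, Finset.card_singleton]

lemma fib_inl_hit (x : X) (i : Fin (n x)) (j : Fin m) (hj : occ lit e s j = ⟨x, i⟩) :
    fibCard lit e f s (Sum.inl ⟨x, i⟩) = 4 := by
  rw [fibCard_eq]
  have h : Fib lit e f s (Sum.inl ⟨x, i⟩) =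
      {Sum.inl j, cyc x i 2, (if f x then cyc x i 0 else cyc x (succF i) 0),
        (if f x then cyc x i 1 else cyc x i 3)} := by
    ext u
    simp only [Fib, Finset.mem_filter, Finset.mem_univ, true_and, comp_eq_inl_iff,
      Finset.mem_insert, Finset.mem_singleton]
    constructor
    · rintro (⟨j', hj', rfl⟩ | h | h | h)
      · exact Or.inl (congrArg Sum.inl (occ_injective lit e s (hj'.trans hj.symm)))
      · tauto
      · tauto
      · tauto
    · rintro (rfl | h | h | h)
      · exact Or.inl ⟨j, hj, rfl⟩
      · tauto
      · tauto
      · tauto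
  rw [h]
  by_cases hfx : f x <;>
    simp only [hfx, if_true, if_false, Bool.false_eq_true, reduceIte] <;>
    · rw [Finset.card_insert_of_notMem (by simp [cyc, succF]),
        Finset.card_insert_of_notMem (by simp [cyc, succF]),
        Finset.card_insert_of_notMem (by simp [cyc, succF]), Finset.card_singleton]

lemma fib_inl_miss (x : X) (i : Fin (n x)) (hmiss : ∀ j, occ lit e s j ≠ ⟨x, i⟩) :
    fibCard lit e f s (Sum.inl ⟨x, i⟩) = 3 := by
  rw [fibCard_eq]
  have h : Fib lit e f s (Sum.inl ⟨x, i⟩) =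
      {cyc x i 2, (if f x then cyc x i 0 else cyc x (succF i) 0),
        (if f x then cyc x i 1 else cyc x i 3)} := by
    ext u
    simp only [Fib, Finset.mem_filter, Finset.mem_univ, true_and, comp_eq_inl_iff,
      Finset.mem_insert, Finset.mem_singleton]
    constructor
    · rintro (⟨j', hj', rfl⟩ | h | h | h)
      · exact absurd hj' (hmiss j')
      · tauto
      · tauto
      · tauto
    · tauto
  rw [h]
  by_cases hfx : f x <;>
    simp only [hfx, if_true, if_false, Bool.false_eq_true, reduceIte] <;>
    · rw [Finset.card_insert_of_notMem (by simp [cyc, succF]),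
        Finset.card_insert_of_notMem (by simp [cyc, succF]), Finset.card_singleton]

lemma fibCard_cases (c : CIdx X n) :
    (fibCard lit e f s c = 4 ∧ ∃ j, c = Sum.inl (occ lit e s j)) ∨
    (fibCard lit e f s c = 3 ∧ (∃ t, c = Sum.inl t) ∧ ∀ j, c ≠ Sum.inl (occ lit e s j)) ∨
    (fibCard lit e f s c = 1 ∧ ∃ t, c = Sum.inr t) := by
  rcases c with ⟨x, i⟩ | ⟨x, i⟩
  · by_cases hhit : ∃ j, occ lit e s j = ⟨x, i⟩
    · obtain ⟨j, hj⟩ := hhit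
      exact Or.inl ⟨fib_inl_hit lit e f s x i j hj, j, by rw [hj]⟩
    · push_neg at hhit
      refine Or.inr (Or.inl ⟨fib_inl_miss lit e f s x i hhit, ⟨⟨x, i⟩, rfl⟩, ?_⟩)
      intro j hj
      exact hhit j (Sum.inl.inj hj).symm
  · exact Or.inr (Or.inr ⟨fib_inr lit e f s x i, ⟨x, i⟩, rfl⟩)

include lit e in
lemma card_sigma : Nat.card (Σ x : X, Fin (n x)) = 3 * m := by
  have e1 : (Σ x : X, Fin (n x)) ≃ (Σ x : X, {q : Fin m × Fin 3 // (lit q.1 q.2).1 = x}) :=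
    Equiv.sigmaCongrRight (fun x => (e x).symm)
  have e2 : (Σ x : X, {q : Fin m × Fin 3 // (lit q.1 q.2).1 = x}) ≃ (Fin m × Fin 3) :=
    Equiv.sigmaFiberEquiv (fun q : Fin m × Fin 3 => (lit q.1 q.2).1)
  rw [Nat.card_congr (e1.trans e2)]
  simp [Nat.card_eq_fintype_card]
  ring

lemma card_fib4 : Nat.card {c : CIdx X n // fibCard lit e f s c = 4} = m := by
  have hF : ∀ j : Fin m, fibCard lit e f s (Sum.inl (occ lit e s j)) = 4 := by
    intro j
    exact fib_inl_hit lit e f s (occ lit e s j).1 (occ lit e s j).2 j (Sigma.eta _).symm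
  let F : Fin m → {c : CIdx X n // fibCard lit e f s c = 4} :=
    fun j => ⟨Sum.inl (occ lit e s j), hF j⟩
  have hbij : Function.Bijective F := by
    constructor
    · intro j j' h
      simp only [F, Subtype.mk.injEq, Sum.inl.injEq] at h
      exact occ_injective lit e s h
    · rintro ⟨c, hc⟩
      rcases fibCard_cases lit e f s c with ⟨_, j, rfl⟩ | ⟨h3, _, _⟩ | ⟨h1, _, _⟩
      · exact ⟨j, rfl⟩
      · omega
      · omega
  rw [← Nat.card_congr (Equiv.ofBijective F hbij), Nat.card_eq_fintype_card, Fintype.card_fin]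

lemma card_fib1 : Nat.card {c : CIdx X n // fibCard lit e f s c = 1} = 3 * m := by
  let F : (Σ x : X, Fin (n x)) → {c : CIdx X n // fibCard lit e f s c = 1} :=
    fun t => ⟨Sum.inr t, fib_inr lit e f s t.1 t.2⟩
  have hbij : Function.Bijective F := by
    constructor
    · intro t t' h
      exact Sum.inr.inj (congrArg Subtype.val h)
    · rintro ⟨c, hc⟩
      rcases fibCard_cases lit e f s c with ⟨h4, _, _⟩ | ⟨h3, _, _⟩ | ⟨_, t, rfl⟩
      · omega
      · omega
      · exact ⟨t, rfl⟩
  rw [← Nat.card_congr (Equiv.ofBijective F hbij), card_sigma lit e]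

lemma card_fib3 : Nat.card {c : CIdx X n // fibCard lit e f s c = 3} = 2 * m := by
  let F : {t : Σ x : X, Fin (n x) // t ∉ Set.range (occ lit e s)} →
      {c : CIdx X n // fibCard lit e f s c = 3} :=
    fun t => ⟨Sum.inl t.1, by
      rcases fibCard_cases lit e f s (Sum.inl t.1) with ⟨h4, j, hj⟩ | ⟨h3, _, _⟩ | ⟨h1, t', ht'⟩
      · exact absurd (Set.mem_range.mpr ⟨j, (Sum.inl.inj hj).symm⟩) t.2
      · exact h3
      · simp at ht'⟩
  have hbij : Function.Bijective F := by
    constructor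
    · intro t t' h
      exact Subtype.ext (Sum.inl.inj (congrArg Subtype.val h))
    · rintro ⟨c, hc⟩
      rcases fibCard_cases lit e f s c with ⟨h4, _, _⟩ | ⟨h3, ⟨t, rfl⟩, hmiss⟩ | ⟨h1, _, _⟩
      · omega
      · refine ⟨⟨t, ?_⟩, rfl⟩
        rintro ⟨j, rfl⟩
        exact hmiss j rfl
      · omega
  rw [← Nat.card_congr (Equiv.ofBijective F hbij)]
  have htot : Nat.card (Σ x : X, Fin (n x)) = 3 * m := card_sigma lit e
  have hr : Nat.card {t : Σ x : X, Fin (n x) // t ∈ Set.range (occ lit e s)} = m := by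
    show Nat.card (Set.range (occ lit e s)) = m
    rw [Nat.card_range_of_injective (occ_injective lit e s)]
    simp [Nat.card_eq_fintype_card]
  have hcompl := Fintype.card_subtype_compl
    (α := Σ x : X, Fin (n x)) (fun t => t ∈ Set.range (occ lit e s))
  have hc1 : Fintype.card {t : Σ x : X, Fin (n x) // ¬ t ∈ Set.range (occ lit e s)}
      = Nat.card {t : Σ x : X, Fin (n x) // t ∉ Set.range (occ lit e s)} :=
    (Nat.card_eq_fintype_card).symm
  have hc2 : Fintype.card {t : Σ x : X, Fin (n x) // t ∈ Set.range (occ lit e s)}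
      = Nat.card {t : Σ x : X, Fin (n x) // t ∈ Set.range (occ lit e s)} :=
    (Nat.card_eq_fintype_card).symm
  have hc3 : Fintype.card (Σ x : X, Fin (n x)) = Nat.card (Σ x : X, Fin (n x)) :=
    (Nat.card_eq_fintype_card).symm
  omega


noncomputable def compEquiv (hs : ∀ j, (lit j (s j)).2 = f ((lit j (s j)).1)) :
    (G2 lit e f s).ConnectedComponent ≃ CIdx X n where
  toFun := SimpleGraph.ConnectedComponent.lift (comp lit e f s)
    (fun _ _ p _ => reachable_comp lit e f s ⟨p⟩)
  invFun c := (G2 lit e f s).connectedComponentMk (repC f c)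
  left_inv := by
    refine SimpleGraph.ConnectedComponent.ind (fun u => ?_)
    exact SimpleGraph.ConnectedComponent.sound ((reach_rep lit e f s hs u).symm)
  right_inv c := comp_repC lit e f s c

lemma supp_card (hs : ∀ j, (lit j (s j)).2 = f ((lit j (s j)).1)) (u : MecVert X m n) :
    Nat.card (((G2 lit e f s).connectedComponentMk u).supp) =
      fibCard lit e f s (comp lit e f s u) := by
  have hset : ((G2 lit e f s).connectedComponentMk u).supp
      = {v | comp lit e f s v = comp lit e f s u} := by
    ext v
    rw [SimpleGraph.ConnectedComponent.mem_supp_iff, SimpleGraph.ConnectedComponent.eq,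
      reachable_iff lit e f s hs]
    rfl
  rw [hset]
  rfl

lemma key_supp (hs : ∀ j, (lit j (s j)).2 = f ((lit j (s j)).1)) :
    ∀ K : (G2 lit e f s).ConnectedComponent,
      Nat.card K.supp = fibCard lit e f s (compEquiv lit e f s hs K) := by
  refine SimpleGraph.ConnectedComponent.ind (fun u => ?_)
  rw [supp_card lit e f s hs u]
  rfl

lemma card_comp (hs : ∀ j, (lit j (s j)).2 = f ((lit j (s j)).1)) (k : ℕ) :
    Nat.card {K : (G2 lit e f s).ConnectedComponent // Nat.card K.supp = k}
      = Nat.card {c : CIdx X n // fibCard lit e f s c = k} :=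
  Nat.card_congr (Equiv.subtypeEquiv (compEquiv lit e f s hs)
    (fun K => by rw [key_supp lit e f s hs K]))

lemma card_pairs (hs : ∀ j, (lit j (s j)).2 = f ((lit j (s j)).1)) :
    Nat.card {p : MecVert X m n × MecVert X m n //
      p.1 ≠ p.2 ∧ (G2 lit e f s).Reachable p.1 p.2} = 24 * m := by
  have h1 : {p : MecVert X m n × MecVert X m n //
      p.1 ≠ p.2 ∧ (G2 lit e f s).Reachable p.1 p.2} ≃
      {p : MecVert X m n × MecVert X m n //
      p.1 ≠ p.2 ∧ comp lit e f s p.1 = comp lit e f s p.2} :=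
    Equiv.subtypeEquivRight (fun p => by rw [reachable_iff lit e f s hs])
  rw [Nat.card_congr h1, Nat.card_eq_fintype_card, Fintype.card_subtype]
  have hU : (Finset.univ.filter fun p : MecVert X m n × MecVert X m n =>
        p.1 ≠ p.2 ∧ comp lit e f s p.1 = comp lit e f s p.2)
      = Finset.univ.biUnion (fun c : CIdx X n => (Fib lit e f s c).offDiag) := by
    ext p
    constructor
    · intro hp
      rw [Finset.mem_filter] at hp
      obtain ⟨-, hne, hcc⟩ := hp
      rw [Finset.mem_biUnion]
      refine ⟨comp lit e f s p.1, Finset.mem_univ _, ?_⟩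
      rw [Finset.mem_offDiag]
      refine ⟨by simp [Fib], by simp [Fib, hcc], hne⟩
    · intro hp
      rw [Finset.mem_biUnion] at hp
      obtain ⟨c, -, hp⟩ := hp
      rw [Finset.mem_offDiag] at hp
      obtain ⟨h1, h2, hne⟩ := hp
      simp only [Fib, Finset.mem_filter] at h1 h2
      rw [Finset.mem_filter]
      exact ⟨Finset.mem_univ _, hne, h1.2.trans h2.2.symm⟩
  rw [hU, Finset.card_biUnion]
  · have hterm : ∀ c : CIdx X n, (Fib lit e f s c).offDiag.card =
        fibCard lit e f s c * fibCard lit e f s c - fibCard lit e f s c := by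
      intro c
      rw [Finset.offDiag_card, ← fibCard_eq]
    calc ∑ c : CIdx X n, (Fib lit e f s c).offDiag.card
        = ∑ c : CIdx X n,
            (fibCard lit e f s c * fibCard lit e f s c - fibCard lit e f s c) :=
          Finset.sum_congr rfl (fun c _ => hterm c)
      _ = 24 * m := ?_
    set g := fun c : CIdx X n => fibCard lit e f s c * fibCard lit e f s c
      - fibCard lit e f s c with hg
    set P4 := Finset.univ.filter (fun c : CIdx X n => fibCard lit e f s c = 4) with hP4
    set P3 := Finset.univ.filter (fun c : CIdx X n => fibCard lit e f s c = 3) with hP3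
    set P1 := Finset.univ.filter (fun c : CIdx X n => fibCard lit e f s c = 1) with hP1
    have hunion : (Finset.univ : Finset (CIdx X n)) = (P4 ∪ P3) ∪ P1 := by
      ext c
      simp only [Finset.mem_univ, true_iff, Finset.mem_union, hP4, hP3, hP1,
        Finset.mem_filter, Finset.mem_univ, true_and]
      rcases fibCard_cases lit e f s c with ⟨h, -⟩ | ⟨h, -⟩ | ⟨h, -⟩ <;> tauto
    have hd43 : Disjoint P4 P3 := by
      rw [Finset.disjoint_left]
      intro c h4 h3
      simp only [hP4, hP3, Finset.mem_filter] at h4 h3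
      omega
    have hd1 : Disjoint (P4 ∪ P3) P1 := by
      rw [Finset.disjoint_left]
      intro c h43 h1
      simp only [hP4, hP3, hP1, Finset.mem_union, Finset.mem_filter] at h43 h1
      omega
    have hcard4 : P4.card = m := by
      have := card_fib4 lit e f s
      rwa [Nat.card_eq_fintype_card, Fintype.card_subtype] at this
    have hcard3 : P3.card = 2 * m := by
      have := card_fib3 lit e f s
      rwa [Nat.card_eq_fintype_card, Fintype.card_subtype] at this
    rw [show ∑ c : CIdx X n, g c = ∑ c ∈ (P4 ∪ P3) ∪ P1, g c from by rw [← hunion],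
      Finset.sum_union hd1, Finset.sum_union hd43]
    have hs4 : ∑ c ∈ P4, g c = 12 * m := by
      rw [Finset.sum_congr rfl (fun c hc => by
        simp only [hP4, Finset.mem_filter] at hc
        show g c = 12
        simp [hg, hc.2]), Finset.sum_const, smul_eq_mul, hcard4]
      omega
    have hs3 : ∑ c ∈ P3, g c = 12 * m := by
      rw [Finset.sum_congr rfl (fun c hc => by
        simp only [hP3, Finset.mem_filter] at hc
        show g c = 6
        simp [hg, hc.2]), Finset.sum_const, smul_eq_mul, hcard3]
      omega
    have hs1 : ∑ c ∈ P1, g c = 0 := by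
      rw [Finset.sum_congr rfl (fun c hc => by
        simp only [hP1, Finset.mem_filter] at hc
        show g c = 0
        simp [hg, hc.2]), Finset.sum_const, smul_eq_mul]
      omega
    rw [hs4, hs3, hs1]
    omega
  · intro c _ c' _ hne
    rw [Function.onFun, Finset.disjoint_left]
    intro p hp hp'
    rw [Finset.mem_offDiag] at hp hp'
    have h1 : comp lit e f s p.1 = c := by
      have := hp.1; simp only [Fib, Finset.mem_filter] at this; exact this.2
    have h2 : comp lit e f s p.1 = c' := by
      have := hp'.1; simp only [Fib, Finset.mem_filter] at this; exact this.2
    exact hne (h1.symm.trans h2)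

end Counting

end Stmt14


/-- If the 3-CNF formula is satisfiable, then the MEC reduction graph has a
spanning subgraph with all components colorful, consisting of exactly `m`
components of size 4, `2m` components of size 3 and `3m` singletons, whose
transitive closure has exactly `12m` edges. -/
theorem stmt14 {X : Type*} [Fintype X] [DecidableEq X] (m : ℕ)
    (lit : Fin m → Fin 3 → X × Bool) (n : X → ℕ)
    (e : ∀ x : X, {q : Fin m × Fin 3 // (lit q.1 q.2).1 = x} ≃ Fin (n x))
    (f : X → Bool) (hf : ∀ j : Fin m, ∃ s : Fin 3, (lit j s).2 = f (lit j s).1) :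
    ∃ G'' : SimpleGraph (MecVert X m n), G'' ≤ mecGraph m n lit e ∧
      (∀ x y : MecVert X m n, G''.Reachable x y → mecColor x = mecColor y → x = y) ∧
      Nat.card {K : G''.ConnectedComponent // Nat.card K.supp = 4} = m ∧
      Nat.card {K : G''.ConnectedComponent // Nat.card K.supp = 3} = 2 * m ∧
      Nat.card {K : G''.ConnectedComponent // Nat.card K.supp = 1} = 3 * m ∧
      Nat.card {p : MecVert X m n × MecVert X m n //
        p.1 ≠ p.2 ∧ G''.Reachable p.1 p.2} / 2 = 12 * m := by
  choose s hs using hf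
  refine ⟨Stmt14.G2 lit e f s, Stmt14.G2_le lit e f s, ?_, ?_, ?_, ?_, ?_⟩
  · exact fun u v hr hc =>
      Stmt14.colorful lit e f s u v (Stmt14.reachable_comp lit e f s hr) hc
  · rw [Stmt14.card_comp lit e f s hs 4]
    exact Stmt14.card_fib4 lit e f s
  · rw [Stmt14.card_comp lit e f s hs 3]
    exact Stmt14.card_fib3 lit e f s
  · rw [Stmt14.card_comp lit e f s hs 1]
    exact Stmt14.card_fib1 lit e f s
  · rw [Stmt14.card_pairs lit e f s hs]
    omega
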